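/- Let i ∈ 𝕊 be the standard quaternion imaginary unit. For every q ∈ ℍ ∖ ⋃_{n∈ℤ}(n+𝕊), the family of quaternions (((q−n)²+1)^{−1}(q−n−i))_{n∈ℤ} is not summable in ℍ; in particular the series Σ_{n∈ℤ} ((q−n)²+1)^{−1}(q−n−i) does not converge unconditionally. -/

import Mathlib

open Quaternion Filter Topology

noncomputable section

/-- The 2-sphere `𝕊 = {q ∈ ℍ : q² = -1}` of quaternionic imaginary units. -/
def QS : Set ℍ[ℝ] := {q | q ^ 2 = -1}

/-- The slice function `g_I(x,y) = f(x + yI)`. -/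
def sliceFun (f : ℍ[ℝ] → ℍ[ℝ]) (I : ℍ[ℝ]) (p : ℝ × ℝ) : ℍ[ℝ] :=
  f ((p.1 : ℍ[ℝ]) + p.2 • I)

/-- `f` is slice regular on `Ω`: for each imaginary unit `I`, the slice function
`g_I(x,y) = f(x+yI)` is real differentiable and satisfies `∂g/∂x + I ∂g/∂y = 0`
at every point `(x,y)` with `x + yI ∈ Ω`. -/
def SliceRegularOn (f : ℍ[ℝ] → ℍ[ℝ]) (Ω : Set ℍ[ℝ]) : Prop :=
  ∀ I ∈ QS, ∀ p : ℝ × ℝ, ((p.1 : ℍ[ℝ]) + p.2 • I) ∈ Ω →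
    DifferentiableAt ℝ (sliceFun f I) p ∧
    fderiv ℝ (sliceFun f I) p (1, 0) + I * fderiv ℝ (sliceFun f I) p (0, 1) = 0

/-- The 2-sphere `x + y𝕊 = {x + yJ : J ∈ 𝕊}` (a real point when `y = 0`). -/
def qSphere (x y : ℝ) : Set ℍ[ℝ] := {q | ∃ I ∈ QS, q = (x : ℍ[ℝ]) + y • I}

/-- The symmetric open set `U(x₀+y₀𝕊, R) = {q : |(q-x₀)² + y₀²| < R²}`. -/
def sphU (x0 y0 R : ℝ) : Set ℍ[ℝ] :=
  {q | ‖(q - (x0 : ℍ[ℝ])) ^ 2 + ((y0 : ℍ[ℝ])) ^ 2‖ < R ^ 2}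

/-- `Ω` is axially symmetric. -/
def AxSymm (Ω : Set ℍ[ℝ]) : Prop :=
  ∀ x y : ℝ, ∀ I ∈ QS, ((x : ℍ[ℝ]) + y • I) ∈ Ω → qSphere x y ⊆ Ω

/-- `Ω` is a symmetric slice domain: an axially symmetric, open, connected set that
meets the real axis and whose intersection with each slice `L_I = ℝ + ℝI` is connected. -/
def SymmSliceDomain (Ω : Set ℍ[ℝ]) : Prop :=
  IsOpen Ω ∧ IsConnected Ω ∧ AxSymm Ω ∧ (∃ r : ℝ, (r : ℍ[ℝ]) ∈ Ω) ∧
    ∀ I ∈ QS, IsConnected {q ∈ Ω | ∃ a b : ℝ, q = (a : ℍ[ℝ]) + b • I}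

/-- The standard quaternionic imaginary unit `i`. -/
def qi : ℍ[ℝ] := ⟨0, 1, 0, 0⟩

private lemma aux_bound (C m MM nn normA : ℝ) (hC0 : 0 ≤ C) (hn0 : 0 ≤ nn)
    (hMC : C + 2 ≤ MM) (hm : m = nn + MM) (ha_ub : normA ≤ (C + m) ^ 2 + 1) :
    normA ≤ 4 * MM ^ 2 * (nn + 1) ^ 2 := by
  have hM1 : (1 : ℝ) ≤ MM := by linarith
  have h1 : C + m + 1 ≤ 2 * MM * (nn + 1) := by nlinarith
  have hpos : (0 : ℝ) ≤ C + m + 1 := by linarith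
  have s1 : (C + m) ^ 2 + 1 ≤ (C + m + 1) ^ 2 := by nlinarith
  have s2 : (C + m + 1) ^ 2 ≤ (2 * MM * (nn + 1)) ^ 2 := by nlinarith
  nlinarith

/-- for any `q` off the spheres `n+𝕊`, the family
`(((q-n)²+1)⁻¹ (q-n-i))_{n∈ℤ}` is not summable. -/
theorem mittag_leffler_example_two_divergence :
    ∀ q ∈ (⋃ n : ℤ, qSphere (n : ℝ) 1)ᶜ,
      ¬ Summable (fun n : ℤ =>
        ((q - (n : ℍ[ℝ])) ^ 2 + 1)⁻¹ * (q - (n : ℍ[ℝ]) - qi)) := by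
  intro q _ hsum
  have hqi : ‖qi‖ = 1 := by
    have h2 : ‖qi‖ ^ 2 = 1 := by
      rw [sq, ← Quaternion.normSq_eq_norm_mul_self]
      rw [Quaternion.normSq_def']; simp [qi]
    nlinarith [norm_nonneg qi]
  set C : ℝ := ‖q‖ with hC
  have hC0 : 0 ≤ C := norm_nonneg q
  obtain ⟨M, hMC⟩ : ∃ M : ℕ, C + 2 ≤ (M : ℝ) := by
    refine ⟨⌈C⌉₊ + 2, ?_⟩
    have := Nat.le_ceil C
    push_cast; linarith
  have hF : Summable (fun n : ℤ =>
      ‖((q - (n : ℍ[ℝ])) ^ 2 + 1)⁻¹ * (q - (n : ℍ[ℝ]) - qi)‖) := hsum.norm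
  have h2 : Summable (fun n : ℕ =>
      ‖((q - (((n : ℤ) + M) : ℍ[ℝ])) ^ 2 + 1)⁻¹ * (q - (((n : ℤ) + M) : ℍ[ℝ]) - qi)‖) := by
    have := hF.comp_injective (i := fun n : ℕ => (n : ℤ) + M)
      (fun a b hab => by exact_mod_cast add_right_cancel hab)
    simpa only [Function.comp_def, Int.cast_add, Int.cast_natCast] using this
  -- key pointwise lower bound
  have key : ∀ n : ℕ, (4 * (M : ℝ) ^ 2)⁻¹ * ((n : ℝ) + 1)⁻¹ ≤
      ‖((q - (((n : ℤ) + M) : ℍ[ℝ])) ^ 2 + 1)⁻¹ * (q - (((n : ℤ) + M) : ℍ[ℝ]) - qi)‖ := by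
    intro n
    have hn0 : (0 : ℝ) ≤ (n : ℝ) := Nat.cast_nonneg n
    set m : ℝ := (n : ℝ) + M with hm
    have hcast : (((n : ℤ) : ℍ[ℝ]) + ((M : ℕ) : ℍ[ℝ])) = ((m : ℝ) : ℍ[ℝ]) := by
      push_cast [hm]; norm_cast
    have hm0 : 0 ≤ m := by positivity
    have hnormm : ‖((m : ℝ) : ℍ[ℝ])‖ = m := by
      rw [Quaternion.norm_coe]; exact abs_of_nonneg hm0
    set a : ℍ[ℝ] := (q - ((m : ℝ) : ℍ[ℝ])) ^ 2 + 1 with hadef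
    set b : ℍ[ℝ] := q - ((m : ℝ) : ℍ[ℝ]) - qi with hbdef
    have hqm_ub : ‖q - ((m : ℝ) : ℍ[ℝ])‖ ≤ C + m := by
      calc ‖q - ((m : ℝ) : ℍ[ℝ])‖ ≤ ‖q‖ + ‖((m : ℝ) : ℍ[ℝ])‖ := norm_sub_le _ _
        _ = C + m := by rw [hnormm]
    have hqm_lb : m - C ≤ ‖q - ((m : ℝ) : ℍ[ℝ])‖ := by
      have := norm_sub_norm_le (((m : ℝ) : ℍ[ℝ])) q
      rw [hnormm, norm_sub_rev] at this
      linarith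
    have hmC : (n : ℝ) + 1 ≤ m - C - 1 := by rw [hm]; linarith
    have hb_lb : m - C - 1 ≤ ‖b‖ := by
      have t : ‖q - ((m : ℝ) : ℍ[ℝ])‖ ≤ ‖b‖ + ‖qi‖ := by
        have e : q - ((m : ℝ) : ℍ[ℝ]) = b + qi := by rw [hbdef]; abel
        rw [e]; exact norm_add_le _ _
      rw [hqi] at t; linarith
    have ha_ub : ‖a‖ ≤ (C + m) ^ 2 + 1 := by
      calc ‖a‖ ≤ ‖(q - ((m : ℝ) : ℍ[ℝ])) ^ 2‖ + ‖(1 : ℍ[ℝ])‖ := norm_add_le _ _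
        _ = ‖q - ((m : ℝ) : ℍ[ℝ])‖ ^ 2 + 1 := by rw [norm_pow, norm_one]
        _ ≤ (C + m) ^ 2 + 1 := by nlinarith [norm_nonneg (q - ((m : ℝ) : ℍ[ℝ]))]
    have ha_lb : 0 < ‖a‖ := by
      have t : ‖(q - ((m : ℝ) : ℍ[ℝ])) ^ 2‖ - ‖(-1 : ℍ[ℝ])‖ ≤ ‖a‖ := by
        have e : a = (q - ((m : ℝ) : ℍ[ℝ])) ^ 2 - (-1 : ℍ[ℝ]) := by rw [hadef, sub_neg_eq_add]
        rw [e]; exact norm_sub_norm_le _ _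
      rw [norm_pow, norm_neg, norm_one] at t
      have hmc2 : 2 ≤ m - C := by rw [hm]; linarith
      nlinarith [t, hmc2, hqm_lb]
    have haD : ‖a‖ ≤ 4 * (M : ℝ) ^ 2 * ((n : ℝ) + 1) ^ 2 :=
      aux_bound C m (M : ℝ) (n : ℝ) ‖a‖ hC0 hn0 hMC hm ha_ub
    have hfinal : ((n : ℝ) + 1) / (4 * (M : ℝ) ^ 2 * ((n : ℝ) + 1) ^ 2) ≤ ‖b‖ / ‖a‖ :=
      div_le_div₀ (norm_nonneg b) (by linarith) ha_lb haD
    have heq : ((n : ℝ) + 1) / (4 * (M : ℝ) ^ 2 * ((n : ℝ) + 1) ^ 2)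
        = (4 * (M : ℝ) ^ 2)⁻¹ * ((n : ℝ) + 1)⁻¹ := by
      have hM0 : (0 : ℝ) < M := by linarith
      field_simp
    rw [hcast, norm_mul, norm_inv, ← hadef, ← hbdef, ← heq, inv_mul_eq_div]
    exact hfinal
  have hsum2 : Summable (fun n : ℕ => (4 * (M : ℝ) ^ 2)⁻¹ * ((n : ℝ) + 1)⁻¹) :=
    Summable.of_nonneg_of_le (fun n => by positivity) key h2
  have hsum3 : Summable (fun n : ℕ => ((n : ℝ) + 1)⁻¹) := by
    have hM0 : (4 * (M : ℝ) ^ 2)⁻¹ ≠ 0 := by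
      have : (0 : ℝ) < M := by linarith
      positivity
    exact (summable_mul_left_iff hM0).mp hsum2
  apply Real.not_summable_natCast_inv
  rw [← summable_nat_add_iff 1]
  simpa using hsum3
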